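/- Let ω : ℝ → ℝ be continuous with at most linear growth and let σ > 0, γ ≥ 1. Define r(ω) = ∫_{-∞}^0 e^{σξ}(1 + |ω(ξ)|² + |ω(ξ)|^{γ+1}) dξ, and for τ ∈ ℝ let θ_τ ω(ξ) = ω(ξ + τ) - ω(τ). Then for every β > 0, e^{βτ} r(θ_τ ω) → 0 as τ → -∞. -/

import Mathlib

open MeasureTheory Real Set Filter

noncomputable section

lemma exp_mul_integrableOn_Iic {c : ℝ} (hc : 0 < c) :
    IntegrableOn (fun x : ℝ => exp (c * x)) (Iic (0 : ℝ)) := by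
  rw [← (Measure.measurePreserving_neg (volume : Measure ℝ)).integrableOn_comp_preimage
      (Homeomorph.neg ℝ).measurableEmbedding]
  simp only [Function.comp_def, neg_preimage, neg_Iic, neg_zero, mul_neg]
  rw [integrableOn_Ici_iff_integrableOn_Ioi]
  simpa [neg_mul] using exp_neg_integrableOn_Ioi 0 hc

set_option maxHeartbeats 1000000 in
theorem stmt3
    (ω : ℝ → ℝ) (hω : Continuous ω) (hω0 : ω 0 = 0)
    (a b : ℝ) (ha : 0 < a) (hb : 0 < b)
    (hgrowth : ∀ ξ, |ω ξ| ≤ a + b * |ξ|)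
    (σ γ : ℝ) (hσ : 0 < σ) (hγ : 1 ≤ γ)
    (β : ℝ) (hβ : 0 < β) :
    Tendsto
      (fun τ : ℝ =>
        Real.exp (β * τ) *
          ∫ ξ in Set.Iic (0 : ℝ),
            Real.exp (σ * ξ) *
              (1 + |ω (τ + ξ) - ω τ| ^ 2 + |ω (τ + ξ) - ω τ| ^ (γ + 1)))
      atBot (nhds 0) := by
  have hγ1 : (0:ℝ) < γ + 1 := by linarith
  have hγ2 : (2:ℝ) ≤ γ + 1 := by linarith
  set δ : ℝ := σ / (2 * (γ + 1)) with hδ_def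
  have hδ : 0 < δ := by positivity
  set K : ℝ := 2 * (γ + 1) / σ with hK_def
  have hK : 0 < K := by positivity
  set c0 : ℝ := 1 + 2 * a + b * K with hc0_def
  have hc0 : 1 ≤ c0 := by nlinarith
  set M : ℝ → ℝ := fun τ => c0 + 2 * b * |τ| with hM_def
  have hM1 : ∀ τ, 1 ≤ M τ := fun τ => by
    have : 0 ≤ 2 * b * |τ| := by positivity
    simp only [hM_def]; linarith
  have h2δ : 2 * δ ≤ σ / 2 := by
    have hδσ : 2 * δ = σ / (γ + 1) := by rw [hδ_def]; field_simp
    rw [hδσ, div_le_div_iff₀ hγ1 (by norm_num : (0:ℝ) < 2)]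
    nlinarith
  -- pointwise bound
  have key : ∀ τ : ℝ, ∀ ξ ∈ Iic (0:ℝ),
      Real.exp (σ * ξ) * (1 + |ω (τ + ξ) - ω τ| ^ 2 + |ω (τ + ξ) - ω τ| ^ (γ + 1))
        ≤ Real.exp (σ / 2 * ξ) * (3 * M τ ^ (γ + 1)) := by
    intro τ ξ hξ
    rw [mem_Iic] at hξ
    set D : ℝ := |ω (τ + ξ) - ω τ| with hD_def
    have hD0 : 0 ≤ D := abs_nonneg _
    set E : ℝ := Real.exp (δ * (-ξ)) with hE_def
    have hE1 : 1 ≤ E := by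
      apply one_le_exp
      have : 0 ≤ -ξ := by linarith
      positivity
    have hE0 : 0 < E := exp_pos _
    -- -ξ ≤ K * E
    have hξE : -ξ ≤ K * E := by
      have h1 : δ * (-ξ) ≤ E := by
        rw [hE_def]; linarith [add_one_le_exp (δ * (-ξ))]
      have hKδ : K = 1 / δ := by
        rw [hK_def, hδ_def]; field_simp
      rw [hKδ, div_mul_eq_mul_div, le_div_iff₀ hδ, mul_comm]
      linarith
    -- D ≤ M τ * E
    have hDM : D ≤ M τ * E := by
      have h1 : D ≤ |ω (τ + ξ)| + |ω τ| := abs_sub _ _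
      have h2 : |ω (τ + ξ)| ≤ a + b * |τ + ξ| := hgrowth _
      have h3 : |ω τ| ≤ a + b * |τ| := hgrowth _
      have h4 : |τ + ξ| ≤ |τ| + (-ξ) := by
        calc |τ + ξ| ≤ |τ| + |ξ| := abs_add_le _ _
        _ = |τ| + (-ξ) := by rw [abs_of_nonpos hξ]
      have h6 : D ≤ 2 * a + 2 * b * |τ| + b * (K * E) := by nlinarith
      have h7 : (2 * a + 2 * b * |τ|) * 1 ≤ (2 * a + 2 * b * |τ|) * E :=
        mul_le_mul_of_nonneg_left hE1 (by positivity)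
      have h8 : D ≤ (2 * a + 2 * b * |τ| + b * K) * E := by nlinarith
      refine h8.trans (mul_le_mul_of_nonneg_right ?_ hE0.le)
      simp only [hM_def, hc0_def]; linarith
    have hM0 : (0:ℝ) < M τ := lt_of_lt_of_le one_pos (hM1 τ)
    -- rpow bound
    have hpow : D ^ (γ + 1) ≤ M τ ^ (γ + 1) * Real.exp (σ / 2 * (-ξ)) := by
      calc D ^ (γ + 1) ≤ (M τ * E) ^ (γ + 1) := Real.rpow_le_rpow hD0 hDM hγ1.le
      _ = M τ ^ (γ + 1) * E ^ (γ + 1) := Real.mul_rpow hM0.le hE0.le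
      _ = M τ ^ (γ + 1) * Real.exp (σ / 2 * (-ξ)) := by
            rw [hE_def, ← Real.exp_mul]
            congr 2
            rw [hδ_def]; field_simp
    -- square bound
    have hsq : D ^ 2 ≤ M τ ^ 2 * E ^ 2 := by
      rw [← mul_pow]
      exact pow_le_pow_left₀ hD0 hDM 2
    -- exp estimates
    have hξσ : 0 ≤ (-ξ) * (σ / 2 - 2 * δ) :=
      mul_nonneg (neg_nonneg.2 hξ) (by linarith)
    have he1 : Real.exp (σ * ξ) ≤ Real.exp (σ / 2 * ξ) := by
      apply exp_le_exp.2; nlinarith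
    have he2 : Real.exp (σ * ξ) * E ^ 2 ≤ Real.exp (σ / 2 * ξ) := by
      rw [hE_def, sq, ← Real.exp_add, ← Real.exp_add]
      apply exp_le_exp.2
      nlinarith
    have he3 : Real.exp (σ * ξ) * Real.exp (σ / 2 * (-ξ)) = Real.exp (σ / 2 * ξ) := by
      rw [← Real.exp_add]; congr 1; ring
    have hM2 : M τ ^ 2 ≤ M τ ^ (γ + 1) := by
      have h0 : M τ ^ (2:ℕ) = M τ ^ ((2:ℕ):ℝ) := (Real.rpow_natCast _ 2).symm
      rw [h0]
      exact Real.rpow_le_rpow_of_exponent_le (hM1 τ) (by push_cast; linarith)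
    have hMp1 : 1 ≤ M τ ^ (γ + 1) := Real.one_le_rpow (hM1 τ) hγ1.le
    have hexp_pos : (0:ℝ) < Real.exp (σ * ξ) := exp_pos _
    have t2 : Real.exp (σ * ξ) * (M τ ^ 2 * E ^ 2) ≤ Real.exp (σ / 2 * ξ) * M τ ^ 2 := by
      calc Real.exp (σ * ξ) * (M τ ^ 2 * E ^ 2)
          = (Real.exp (σ * ξ) * E ^ 2) * M τ ^ 2 := by ring
        _ ≤ Real.exp (σ / 2 * ξ) * M τ ^ 2 :=
            mul_le_mul_of_nonneg_right he2 (sq_nonneg _)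
    have t3 : Real.exp (σ * ξ) * (M τ ^ (γ + 1) * Real.exp (σ / 2 * (-ξ)))
        ≤ Real.exp (σ / 2 * ξ) * M τ ^ (γ + 1) := by
      rw [show Real.exp (σ * ξ) * (M τ ^ (γ + 1) * Real.exp (σ / 2 * (-ξ)))
        = (Real.exp (σ * ξ) * Real.exp (σ / 2 * (-ξ))) * M τ ^ (γ + 1) by ring, he3]
    calc Real.exp (σ * ξ) * (1 + D ^ 2 + D ^ (γ + 1))
        = Real.exp (σ * ξ) * 1 + Real.exp (σ * ξ) * (D ^ 2)
          + Real.exp (σ * ξ) * (D ^ (γ + 1)) := by ring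
      _ ≤ Real.exp (σ / 2 * ξ) * 1 + Real.exp (σ / 2 * ξ) * M τ ^ 2
          + Real.exp (σ / 2 * ξ) * M τ ^ (γ + 1) := by
          have u2 := mul_le_mul_of_nonneg_left hsq hexp_pos.le
          have u3 := mul_le_mul_of_nonneg_left hpow hexp_pos.le
          have u1 := mul_le_mul_of_nonneg_right he1 (zero_le_one' ℝ)
          exact add_le_add (add_le_add u1 (u2.trans t2)) (u3.trans t3)
      _ ≤ Real.exp (σ / 2 * ξ) * (3 * M τ ^ (γ + 1)) := by
          have h := exp_pos (σ / 2 * ξ)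
          nlinarith [mul_nonneg h.le (sub_nonneg.2 hM2), mul_nonneg h.le (sub_nonneg.2 hMp1)]
  -- integrability of the dominating function
  have hint : IntegrableOn (fun ξ : ℝ => Real.exp (σ / 2 * ξ)) (Iic (0:ℝ)) :=
    exp_mul_integrableOn_Iic (by positivity)
  set C : ℝ := ∫ ξ in Iic (0:ℝ), Real.exp (σ / 2 * ξ) with hC_def
  have hC0 : 0 ≤ C := setIntegral_nonneg measurableSet_Iic fun x _ => (exp_pos _).le
  -- bound on the integral
  have hIb : ∀ τ : ℝ,
      (∫ ξ in Set.Iic (0 : ℝ), Real.exp (σ * ξ) *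
          (1 + |ω (τ + ξ) - ω τ| ^ 2 + |ω (τ + ξ) - ω τ| ^ (γ + 1)))
        ≤ C * (3 * M τ ^ (γ + 1)) := by
    intro τ
    have hgi : IntegrableOn (fun ξ : ℝ => Real.exp (σ / 2 * ξ) * (3 * M τ ^ (γ + 1)))
        (Iic (0:ℝ)) := hint.mul_const _
    calc (∫ ξ in Set.Iic (0 : ℝ), Real.exp (σ * ξ) *
          (1 + |ω (τ + ξ) - ω τ| ^ 2 + |ω (τ + ξ) - ω τ| ^ (γ + 1)))
        ≤ ∫ ξ in Set.Iic (0 : ℝ), Real.exp (σ / 2 * ξ) * (3 * M τ ^ (γ + 1)) := by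
          apply integral_mono_of_nonneg
          · filter_upwards [ae_restrict_mem measurableSet_Iic] with ξ _
            have := Real.rpow_nonneg (abs_nonneg (ω (τ + ξ) - ω τ)) (γ + 1)
            have := sq_nonneg |ω (τ + ξ) - ω τ|
            positivity
          · exact hgi
          · filter_upwards [ae_restrict_mem measurableSet_Iic] with ξ hξ
            exact key τ ξ hξ
      _ = C * (3 * M τ ^ (γ + 1)) := by rw [integral_mul_const]
  -- nonnegativity
  have hnn : ∀ τ : ℝ, 0 ≤ Real.exp (β * τ) *
      ∫ ξ in Set.Iic (0 : ℝ), Real.exp (σ * ξ) *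
          (1 + |ω (τ + ξ) - ω τ| ^ 2 + |ω (τ + ξ) - ω τ| ^ (γ + 1)) := by
    intro τ
    apply mul_nonneg (exp_pos _).le
    apply setIntegral_nonneg measurableSet_Iic
    intro ξ _
    have := Real.rpow_nonneg (abs_nonneg (ω (τ + ξ) - ω τ)) (γ + 1)
    have := sq_nonneg |ω (τ + ξ) - ω τ|
    positivity
  -- the upper bound tends to 0
  have hup : Tendsto (fun τ : ℝ => 3 * C * (1 + 2*b) ^ (γ + 1) *
      ((-τ) ^ (γ + 1) * Real.exp (-β * (-τ)))) atBot (nhds 0) := by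
    have h1 : Tendsto (fun x : ℝ => x ^ (γ + 1) * Real.exp (-β * x)) atTop (nhds 0) :=
      tendsto_rpow_mul_exp_neg_mul_atTop_nhds_zero (γ + 1) β hβ
    have h2 := (h1.comp tendsto_neg_atBot_atTop).const_mul (3 * C * (1 + 2*b) ^ (γ + 1))
    simpa using h2
  -- final squeeze
  apply squeeze_zero' (Eventually.of_forall hnn) _ hup
  filter_upwards [eventually_le_atBot (-c0)] with τ hτ
  have hτ0 : τ ≤ 0 := by linarith
  have hτc : c0 ≤ -τ := by linarith
  have habs : |τ| = -τ := abs_of_nonpos hτ0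
  have hMτ : M τ ≤ (1 + 2*b) * (-τ) := by
    simp only [hM_def, habs]; nlinarith
  have hMp : M τ ^ (γ + 1) ≤ ((1 + 2*b) * (-τ)) ^ (γ + 1) :=
    Real.rpow_le_rpow (by linarith [hM1 τ]) hMτ hγ1.le
  have hsplit : ((1 + 2*b) * (-τ)) ^ (γ + 1) = (1 + 2*b) ^ (γ + 1) * (-τ) ^ (γ + 1) :=
    Real.mul_rpow (by linarith) (by linarith)
  have hβτ : Real.exp (β * τ) = Real.exp (-β * (-τ)) := by rw [neg_mul_neg]
  have hMp' : M τ ^ (γ + 1) ≤ (1 + 2*b) ^ (γ + 1) * (-τ) ^ (γ + 1) := hsplit ▸ hMp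
  calc Real.exp (β * τ) *
      ∫ ξ in Set.Iic (0 : ℝ), Real.exp (σ * ξ) *
          (1 + |ω (τ + ξ) - ω τ| ^ 2 + |ω (τ + ξ) - ω τ| ^ (γ + 1))
      ≤ Real.exp (β * τ) * (C * (3 * M τ ^ (γ + 1))) :=
        mul_le_mul_of_nonneg_left (hIb τ) (exp_pos _).le
    _ ≤ Real.exp (β * τ) * (C * (3 * ((1 + 2*b) ^ (γ + 1) * (-τ) ^ (γ + 1)))) := by
        have := mul_le_mul_of_nonneg_left hMp'
          (show (0:ℝ) ≤ Real.exp (β * τ) * (C * 3) by positivity)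
        nlinarith [this]
    _ = 3 * C * (1 + 2*b) ^ (γ + 1) * ((-τ) ^ (γ + 1) * Real.exp (-β * (-τ))) := by
        rw [← hβτ]; ring
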